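/- Contiguous relation for monic q-Hahn polynomials in α: for n ≥ 1 and nonnegative integer N, Q̃_n(x̄; α/q, β, N | q) = Q̃_n(x̄; α, β, N | q) + [α (q^n − 1)(β q^n − 1)(q^n − q^{N+1}) / (q^N (αβ q^{2n} − 1)(αβ q^{2n} − q))] · Q̃_{n−1}(x̄; α, β, N | q), as an identity of polynomials in x̄ (assuming the denominators are nonzero). -/

import Mathlib

/-- The q-Pochhammer symbol `(a; q)_m`. -/
noncomputable def qPoch (q a : ℝ) (m : ℕ) : ℝ := ∏ j ∈ Finset.range m, (1 - a * q ^ j)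

/-- The monic q-Hahn polynomial (as a function of `x̄ = q^{-x}`):
`Q̃_n(x̄; α, β, N | q) = ((αq;q)_n (q^{-N};q)_n / (αβq^{n+1};q)_n) ₃φ₂(q^{-n}, αβq^{n+1}, x̄; αq, q^{-N}; q, q)`. -/
noncomputable def qHahn (q α β : ℝ) (N n : ℕ) (xb : ℝ) : ℝ :=
  (qPoch q (α * q) n * qPoch q (q ^ (-(N : ℤ))) n / qPoch q (α * β * q ^ (n + 1)) n) *
    ∑ m ∈ Finset.range (n + 1),
      qPoch q (q ^ (-(n : ℤ))) m * qPoch q (α * β * q ^ (n + 1)) m * qPoch q xb m * q ^ m /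
        (qPoch q (α * q) m * qPoch q (q ^ (-(N : ℤ))) m * qPoch q q m)

lemma qPoch_succ (q a : ℝ) (m : ℕ) : qPoch q a (m + 1) = qPoch q a m * (1 - a * q ^ m) :=
  Finset.prod_range_succ _ _

lemma qPoch_shift (q a : ℝ) (m : ℕ) :
    (1 - a) * qPoch q (a * q) m = qPoch q a m * (1 - a * q ^ m) := by
  induction m with
  | zero => simp [qPoch]
  | succ k ih =>
    rw [qPoch_succ, qPoch_succ, ← mul_assoc, ih, pow_succ]
    ring

lemma qPoch_add (q a : ℝ) (m k : ℕ) :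
    qPoch q a (m + k) = qPoch q a m * qPoch q (a * q ^ m) k := by
  unfold qPoch
  rw [Finset.prod_range_add]
  congr 1
  apply Finset.prod_congr rfl
  intro j _
  rw [mul_assoc, ← pow_add]

lemma qPoch_ne_zero (q a : ℝ) (m : ℕ) (h : ∀ j, j < m → a * q ^ j ≠ 1) :
    qPoch q a m ≠ 0 := by
  unfold qPoch
  apply Finset.prod_ne_zero_iff.mpr
  intro j hj hz
  exact h j (Finset.mem_range.mp hj) (by linarith)

lemma qPoch_mul_shift (q a : ℝ) (m : ℕ) (h : (1:ℝ) - a * q ^ m ≠ 0) :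
    qPoch q a m = (1 - a) * qPoch q (a * q) m / (1 - a * q ^ m) := by
  rw [eq_div_iff h]
  linear_combination (qPoch_shift q a m).symm

lemma qPoch_shift' (q a : ℝ) (m : ℕ) (h : (1:ℝ) - a ≠ 0) :
    qPoch q (a * q) m = qPoch q a m * (1 - a * q ^ m) / (1 - a) := by
  rw [eq_div_iff h]
  linear_combination qPoch_shift q a m

lemma qPoch_pred (q a : ℝ) (k : ℕ) (h : (1:ℝ) - a * q ^ k ≠ 0) :
    qPoch q a k = qPoch q a (k + 1) / (1 - a * q ^ k) :=
  (eq_div_iff h).mpr (qPoch_succ q a k).symm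

set_option maxHeartbeats 1600000 in
/-- Contiguous relation for monic q-Hahn polynomials in α. -/
theorem qHahn_shift_alpha (q α β : ℝ) (N n : ℕ)
    (hq : 0 < q) (hq1 : q < 1) (hn : 1 ≤ n) (hnN : n ≤ N)
    (hα : ∀ m : ℕ, α * q ^ m ≠ 1) (hαβ : ∀ m : ℕ, α * β * q ^ m ≠ 1) :
    ∀ xb : ℝ,
      qHahn q (α / q) β N n xb
        = qHahn q α β N n xb
          + (α * (q ^ n - 1) * (β * q ^ n - 1) * (q ^ n - q ^ (N + 1)) /
              (q ^ N * (α * β * q ^ (2 * n) - 1) * (α * β * q ^ (2 * n) - q))) *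
            qHahn q α β N (n - 1) xb := by
  obtain ⟨k, rfl⟩ : ∃ k, n = k + 1 := ⟨n - 1, (Nat.succ_pred_eq_of_pos hn).symm⟩
  intro xb
  have hq0 : q ≠ 0 := ne_of_gt hq
  unfold qHahn
  simp only [Nat.add_sub_cancel]
  rw [div_mul_cancel₀ α hq0,
    show α / q * β * q ^ (k + 1 + 1) = α * β * q ^ (k + 1) by
      field_simp; ring]
  have hzero : qPoch q ((q : ℝ) ^ (-(k : ℤ))) (k + 1) = 0 := by
    rw [qPoch_succ]
    have : ((q : ℝ) ^ (-(k : ℤ))) * q ^ k = 1 := by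
      rw [zpow_neg, zpow_natCast]
      exact inv_mul_cancel₀ (pow_ne_zero _ hq0)
    rw [this]; ring
  rw [show (∑ m ∈ Finset.range (k + 1),
        qPoch q ((q : ℝ) ^ (-(k : ℤ))) m * qPoch q (α * β * q ^ (k + 1)) m * qPoch q xb m * q ^ m /
          (qPoch q (α * q) m * qPoch q ((q : ℝ) ^ (-(N : ℤ))) m * qPoch q q m))
      = ∑ m ∈ Finset.range (k + 1 + 1),
        qPoch q ((q : ℝ) ^ (-(k : ℤ))) m * qPoch q (α * β * q ^ (k + 1)) m * qPoch q xb m * q ^ m /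
          (qPoch q (α * q) m * qPoch q ((q : ℝ) ^ (-(N : ℤ))) m * qPoch q q m) from by
    rw [eq_comm, Finset.sum_range_succ, hzero]
    simp]
  simp only [Finset.mul_sum]
  rw [← Finset.sum_add_distrib]
  refine Finset.sum_congr rfl fun m hm => ?_
  have hmk : m ≤ k + 1 := Nat.lt_succ_iff.mp (Finset.mem_range.mp hm)
  have hmt : m + (k + 1 - m) = k + 1 := Nat.add_sub_cancel' hmk
  -- nonzero facts
  have hα1 : (1:ℝ) - α ≠ 0 := by
    have := hα 0; rw [pow_zero, mul_one] at this
    exact sub_ne_zero.mpr (Ne.symm this)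
  have hαj : ∀ j : ℕ, (1:ℝ) - α * q ^ j ≠ 0 := fun j => sub_ne_zero.mpr (Ne.symm (hα j))
  have habj : ∀ j : ℕ, (1:ℝ) - α * β * q ^ (k+1) * q ^ j ≠ 0 := by
    intro j
    have h := hαβ (k + 1 + j)
    rw [pow_add, ← mul_assoc] at h
    exact sub_ne_zero.mpr (Ne.symm h)
  have hab0 : (1:ℝ) - α * β * q ^ (k+1) ≠ 0 := sub_ne_zero.mpr (Ne.symm (hαβ (k+1)))
  have haqk : (1:ℝ) - α * q * q ^ k ≠ 0 := by
    have := hαj (k+1)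
    rw [pow_succ, ← mul_assoc] at this
    -- this : 1 - α * q ^ k * q ≠ 0 ; want 1 - α * q * q ^ k ≠ 0
    intro h; apply this; linarith [h]
  have hpowlt : ∀ j : ℕ, j < N → (1:ℝ) - (q ^ N)⁻¹ * q ^ j ≠ 0 := by
    intro j hj h
    have hlt : q ^ N < q ^ j := pow_lt_pow_right_of_lt_one₀ hq hq1 hj
    have hNpos : (0:ℝ) < q ^ N := pow_pos hq N
    have hgt : (1:ℝ) < (q ^ N)⁻¹ * q ^ j := by
      rw [inv_mul_eq_div, lt_div_iff₀ hNpos]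
      linarith
    linarith
  have hqk1lt : (1:ℝ) - ((q:ℝ) ^ (k+1))⁻¹ ≠ 0 := by
    have h1 : q ^ (k+1) < 1 := pow_lt_one₀ (le_of_lt hq) hq1 (Nat.succ_ne_zero k)
    have h2 : (0:ℝ) < q ^ (k+1) := pow_pos hq _
    have : (1:ℝ) < (q ^ (k+1))⁻¹ := (one_lt_inv₀ h2).mpr h1
    intro h; linarith
  -- atom nonvanishing
  have hu : qPoch q (α * q) m ≠ 0 := by
    apply qPoch_ne_zero
    intro j _
    have := hα (j+1)
    rw [pow_succ] at this
    intro h; apply this; linarith [h]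
  have hr : qPoch q q m ≠ 0 := by
    apply qPoch_ne_zero
    intro j _
    have h1 : q * q ^ j < 1 := by
      have := pow_lt_one₀ (le_of_lt hq) hq1 (Nat.succ_ne_zero j)
      rw [pow_succ] at this; nlinarith [pow_pos hq j]
    linarith
  have hκm : qPoch q ((q ^ N)⁻¹ : ℝ) m ≠ 0 := by
    apply qPoch_ne_zero
    intro j hj
    have hjN : j < N := lt_of_lt_of_le hj (le_trans hmk hnN)
    intro h
    exact hpowlt j hjN (by linarith)
  have hW : qPoch q (α * β * q ^ (k+1)) (k+1) ≠ 0 := by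
    apply qPoch_ne_zero
    intro j _
    have h := hαβ (k + 1 + j)
    rw [pow_add, ← mul_assoc] at h
    exact h
  have hκk : (1:ℝ) - ((q:ℝ) ^ N)⁻¹ * q ^ k ≠ 0 :=
    hpowlt k (lt_of_lt_of_le (Nat.lt_succ_self k) hnN)
  have hqN : (q:ℝ) ^ N ≠ 0 := pow_ne_zero N hq0
  have hqk1 : (q:ℝ) ^ (k+1) ≠ 0 := pow_ne_zero (k+1) hq0
  have hK1 : α * β * q ^ (2*(k+1)) - 1 ≠ 0 := sub_ne_zero.mpr (hαβ (2*(k+1)))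
  have hK2 : α * β * q ^ (2*(k+1)) - q ≠ 0 := by
    have he : α * β * q ^ (2*(k+1)) - q = q * (α * β * q ^ (2*k+1) - 1) := by ring
    rw [he]
    exact mul_ne_zero hq0 (sub_ne_zero.mpr (hαβ (2*k+1)))
  have hNk : (q:ℝ) ^ N - q ^ k ≠ 0 :=
    sub_ne_zero.mpr (ne_of_lt (pow_lt_pow_right_of_lt_one₀ hq hq1
      (lt_of_lt_of_le (Nat.lt_succ_self k) hnN)))
  have hqk11 : (q:ℝ) ^ (k+1) - 1 ≠ 0 :=
    sub_ne_zero.mpr (ne_of_lt (pow_lt_one₀ (le_of_lt hq) hq1 (Nat.succ_ne_zero k)))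
  have hNinv : (q:ℝ) ^ (-(N:ℤ)) = ((q:ℝ) ^ N)⁻¹ := by rw [zpow_neg, zpow_natCast]
  have hkinv : (q:ℝ) ^ (-((k+1:ℕ):ℤ)) = ((q:ℝ) ^ (k+1))⁻¹ := by rw [zpow_neg, zpow_natCast]
  have hk : (q:ℝ) ^ (-(k:ℤ)) = ((q:ℝ) ^ (k+1))⁻¹ * q := by
    rw [pow_succ, mul_inv, zpow_neg, zpow_natCast, inv_mul_cancel_right₀ hq0]
  rw [hNinv, hkinv, hk]
  rw [show α * β * q ^ (k + 1 + 1) = α * β * q ^ (k + 1) * q by ring]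
  rw [qPoch_shift' q (α * β * q ^ (k+1)) (k+1) hab0,
      qPoch_shift' q (α * β * q ^ (k+1)) m hab0,
      qPoch_shift' q (((q:ℝ) ^ (k+1))⁻¹) m hqk1lt,
      qPoch_mul_shift q α (k+1) (hαj (k+1)),
      qPoch_mul_shift q α m (hαj m),
      qPoch_pred q (α * q) k haqk,
      qPoch_pred q (((q:ℝ) ^ N)⁻¹) k hκk,
      qPoch_pred q (α * β * q ^ (k+1)) k (habj k),
      show qPoch q (α * q) (k+1)
          = qPoch q (α * q) m * qPoch q (α * q * q ^ m) (k + 1 - m) from by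
        conv_lhs => rw [← hmt, qPoch_add]]
  set u := qPoch q (α * q) m with hu_def
  set v := qPoch q (α * q * q ^ m) (k + 1 - m) with hv_def
  set x := qPoch q xb m with hx_def
  set w1 := qPoch q (α * β * q ^ (k+1)) m with hw_def
  set W1 := qPoch q (α * β * q ^ (k+1)) (k+1) with hW_def
  set s := qPoch q (((q:ℝ) ^ (k+1))⁻¹) m with hs_def
  set κn := qPoch q (((q:ℝ) ^ N)⁻¹) (k+1) with hκn_def
  set κm := qPoch q (((q:ℝ) ^ N)⁻¹) m with hκm_def
  set r := qPoch q q m with hr_def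
  have e1 : (1 - α) * (u * v) / (1 - α * q ^ (k + 1)) * κn / W1 *
      (s * w1 * x * q ^ m / ((1 - α) * u / (1 - α * q ^ m) * κm * r))
      = u * v * κn * s * w1 * x * q ^ m / (W1 * u * κm * r) *
        ((1 - α * q ^ m) / (1 - α * q ^ (k + 1))) := by
    field_simp [hu, hκm, hr, hW, hα1, hαj m, hαj (k+1)]
  have e2 : u * v * κn / (W1 * (1 - α * β * q ^ (k + 1) * q ^ (k + 1)) / (1 - α * β * q ^ (k + 1))) *
        (s * (w1 * (1 - α * β * q ^ (k + 1) * q ^ m) / (1 - α * β * q ^ (k + 1))) * x * q ^ m /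
          (u * κm * r))
      = u * v * κn * s * w1 * x * q ^ m / (W1 * u * κm * r) *
        ((1 - α * β * q ^ (k + 1) * q ^ m) / (1 - α * β * q ^ (k + 1) * q ^ (k + 1))) := by
    field_simp [hu, hκm, hr, hW, hab0, habj m, habj (k+1)]
  have e3 : u * v / (1 - α * q * q ^ k) * (κn / (1 - (q ^ N)⁻¹ * q ^ k)) /
          (W1 / (1 - α * β * q ^ (k + 1) * q ^ k)) *
        (s * (1 - (q ^ (k + 1))⁻¹ * q ^ m) / (1 - (q ^ (k + 1))⁻¹) * w1 * x * q ^ m / (u * κm * r))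
      = u * v * κn * s * w1 * x * q ^ m / (W1 * u * κm * r) *
        ((1 - α * β * q ^ (k + 1) * q ^ k) * (1 - (q ^ (k + 1))⁻¹ * q ^ m) /
          ((1 - α * q * q ^ k) * (1 - (q ^ N)⁻¹ * q ^ k) * (1 - (q ^ (k + 1))⁻¹))) := by
    field_simp [hu, hκm, hr, hW, haqk, hκk, hqk1lt, habj k, hqN, hqk1, hNk, hqk11]
  rw [e1, e2, e3]
  have key : (1 - α * q ^ m) / (1 - α * q ^ (k + 1))
      = (1 - α * β * q ^ (k + 1) * q ^ m) / (1 - α * β * q ^ (k + 1) * q ^ (k + 1))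
        + α * (q ^ (k + 1) - 1) * (β * q ^ (k + 1) - 1) * (q ^ (k + 1) - q ^ (N + 1)) /
            (q ^ N * (α * β * q ^ (2 * (k + 1)) - 1) * (α * β * q ^ (2 * (k + 1)) - q)) *
          ((1 - α * β * q ^ (k + 1) * q ^ k) * (1 - (q ^ (k + 1))⁻¹ * q ^ m) /
            ((1 - α * q * q ^ k) * (1 - (q ^ N)⁻¹ * q ^ k) * (1 - (q ^ (k + 1))⁻¹))) := by
    field_simp [hαj (k+1), habj (k+1), haqk, hκk, hqk1lt, hqN, hqk1, hNk, hqk11, hK1, hK2, (show (1:ℝ) - α * (q ^ (k + 1)) ^ 2 * β ≠ 0 by intro h; apply habj (k+1); linear_combination h)]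
    ring
  linear_combination (u * v * κn * s * w1 * x * q ^ m / (W1 * u * κm * r)) * key
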